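/- Let G be a finite simple graph. Every maximum matching in G is induced if and only if every connected component of G is a star or a triangle. -/
import Mathlib

open SimpleGraph

/-- A matching `M` in `G` is a *maximum matching* if no matching of `G` has more edges. -/
def IsMaximumMatching {V : Type*} (G : SimpleGraph V) (M : G.Subgraph) : Prop :=
  M.IsMatching ∧ ∀ M' : G.Subgraph, M'.IsMatching → M'.edgeSet.ncard ≤ M.edgeSet.ncard

/-- A matching `M` in `G` is *induced* if the subgraph `G(M)` of `G` induced by the
vertices covered by `M` is `1`-regular, i.e. every vertex of `G(M)` has exactly one
neighbour in `G(M)`. -/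
def IsInducedMatching {V : Type*} (G : SimpleGraph V) (M : G.Subgraph) : Prop :=
  M.IsMatching ∧ ∀ v : M.verts, ∃! w : M.verts, (G.induce M.verts).Adj v w

section Helpers

set_option linter.unusedSectionVars false

variable {V : Type*} [Fintype V] {G : SimpleGraph V}

lemma exists_maximum_matching (G : SimpleGraph V) : ∃ M : G.Subgraph, IsMaximumMatching G M := by
  classical
  set S : Set ℕ := {n | ∃ M : G.Subgraph, M.IsMatching ∧ M.edgeSet.ncard = n} with hS
  have hne : S.Nonempty := ⟨(⊥ : G.Subgraph).edgeSet.ncard, ⊥, fun v hv => absurd hv (by simp), rfl⟩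
  have hbdd : BddAbove S := by
    refine ⟨Fintype.card (Sym2 V), ?_⟩
    rintro n ⟨M, _, rfl⟩
    have : M.edgeSet.ncard ≤ (Set.univ : Set (Sym2 V)).ncard :=
      Set.ncard_le_ncard (Set.subset_univ _) (Set.finite_univ)
    rwa [Set.ncard_univ, Nat.card_eq_fintype_card] at this
  obtain ⟨M, hM, hcard⟩ := Nat.sSup_mem hne hbdd
  exact ⟨M, hM, fun M' hM' => hcard ▸ le_csSup hbdd ⟨M', hM', rfl⟩⟩

lemma no_augment {M : G.Subgraph} (hM : IsMaximumMatching G M) {u w : V}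
    (huw : G.Adj u w) (hu : u ∉ M.verts) (hw : w ∉ M.verts) : False := by
  classical
  set M' : G.Subgraph := M ⊔ G.subgraphOfAdj huw with hM'
  have hsupp : Disjoint M.support (G.subgraphOfAdj huw).support := by
    rw [support_subgraphOfAdj]
    rw [Set.disjoint_right]
    intro x hx
    rcases hx with rfl | rfl
    · exact fun hx => hu (M.support_subset_verts hx)
    · exact fun hx => hw (M.support_subset_verts hx)
  have hmatch : M'.IsMatching := hM.1.sup (Subgraph.IsMatching.subgraphOfAdj huw) hsupp
  have hce : s(u, w) ∉ M.edgeSet := fun h => hu (M.edge_vert (Subgraph.mem_edgeSet.mp h))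
  have hcard : M'.edgeSet.ncard = M.edgeSet.ncard + 1 := by
    rw [hM', Subgraph.edgeSet_sup, edgeSet_subgraphOfAdj, Set.union_singleton,
      Set.ncard_insert_of_notMem hce (Set.toFinite _)]
  have := hM.2 M' hmatch
  omega

lemma unique_nbr {M : G.Subgraph} (hind : IsInducedMatching G M) {u u' w : V}
    (huu' : M.Adj u u') (huw : G.Adj u w) (hw : w ∈ M.verts) : w = u' := by
  have hu : u ∈ M.verts := M.edge_vert huu'
  obtain ⟨x, hx, huniq⟩ := hind.2 ⟨u, hu⟩
  have h1 : (⟨w, hw⟩ : M.verts) = x := huniq ⟨w, hw⟩ huw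
  have h2 : (⟨u', M.edge_vert huu'.symm⟩ : M.verts) = x := huniq _ (M.adj_sub huu')
  exact congrArg Subtype.val (h1.trans h2.symm)

set_option linter.unusedSectionVars false

lemma induce_matching {M : G.Subgraph} (hM : M.IsMatching) {u u' : V} (huu' : M.Adj u u') :
    (M.induce (M.verts \ {u, u'})).IsMatching := by
  intro v hv
  simp only [Subgraph.induce_verts, Set.mem_diff, Set.mem_insert_iff, Set.mem_singleton_iff] at hv
  obtain ⟨hvM, hvne⟩ := hv
  push_neg at hvne
  obtain ⟨p, hp, hpuniq⟩ := hM hvM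
  have hpu : p ≠ u := by
    rintro rfl
    obtain ⟨q, hq, hquniq⟩ := hM (M.edge_vert huu')
    have h1 := hquniq v hp.symm
    have h2 := hquniq u' huu'
    exact hvne.2 (h1.trans h2.symm)
  have hpu' : p ≠ u' := by
    rintro rfl
    obtain ⟨q, hq, hquniq⟩ := hM (M.edge_vert huu'.symm)
    have h1 := hquniq v hp.symm
    have h2 := hquniq u huu'.symm
    exact hvne.1 (h1.trans h2.symm)
  refine ⟨p, ?_, ?_⟩
  · refine ⟨⟨hvM, ?_⟩, ⟨M.edge_vert hp.symm, ?_⟩, hp⟩ <;>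
      simp only [Set.mem_insert_iff, Set.mem_singleton_iff] <;> push_neg
    · exact hvne
    · exact ⟨hpu, hpu'⟩
  · rintro y ⟨-, -, hy⟩
    exact hpuniq y hy

lemma induce_edgeSet {M : G.Subgraph} (hM : M.IsMatching) {u u' : V} (huu' : M.Adj u u') :
    (M.induce (M.verts \ {u, u'})).edgeSet = M.edgeSet \ {s(u, u')} := by
  ext e
  induction e using Sym2.ind with
  | _ x y =>
    simp only [Subgraph.mem_edgeSet, Subgraph.induce_adj, Set.mem_diff, Set.mem_insert_iff,
      Set.mem_singleton_iff, Sym2.eq, Sym2.rel_iff', Prod.mk.injEq, Prod.swap_prod_mk]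
    constructor
    · rintro ⟨⟨hx, hxne⟩, ⟨hy, hyne⟩, hadj⟩
      push_neg at hxne hyne
      refine ⟨hadj, ?_⟩
      rintro (⟨rfl, rfl⟩ | ⟨rfl, rfl⟩)
      · exact hxne.1 rfl
      · exact hxne.2 rfl
    · rintro ⟨hadj, hne⟩
      have hxu : x ≠ u := by
        rintro rfl
        obtain ⟨q, hq, hquniq⟩ := hM (M.edge_vert huu')
        exact hne (Or.inl ⟨rfl, (hquniq y hadj).trans (hquniq u' huu').symm⟩)
      have hxu' : x ≠ u' := by
        rintro rfl
        obtain ⟨q, hq, hquniq⟩ := hM (M.edge_vert huu'.symm)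
        exact hne (Or.inr ⟨rfl, (hquniq y hadj).trans (hquniq u huu'.symm).symm⟩)
      have hyu : y ≠ u := by
        rintro rfl
        obtain ⟨q, hq, hquniq⟩ := hM (M.edge_vert huu')
        exact hne (Or.inr ⟨(hquniq x hadj.symm).trans (hquniq u' huu').symm, rfl⟩)
      have hyu' : y ≠ u' := by
        rintro rfl
        obtain ⟨q, hq, hquniq⟩ := hM (M.edge_vert huu'.symm)
        exact hne (Or.inl ⟨(hquniq x hadj.symm).trans (hquniq u huu'.symm).symm, rfl⟩)
      refine ⟨⟨M.edge_vert hadj, ?_⟩, ⟨M.edge_vert hadj.symm, ?_⟩, hadj⟩ <;> push_neg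
      · exact ⟨hxu, hxu'⟩
      · exact ⟨hyu, hyu'⟩

lemma swap_matching {M : G.Subgraph} (hM : IsMaximumMatching G M) {u u' w : V}
    (huu' : M.Adj u u') (huw : G.Adj u w) (hw : w ∉ M.verts) :
    IsMaximumMatching G (M.induce (M.verts \ {u, u'}) ⊔ G.subgraphOfAdj huw) ∧
    (M.induce (M.verts \ {u, u'}) ⊔ G.subgraphOfAdj huw).Adj u w ∧
    (M.induce (M.verts \ {u, u'}) ⊔ G.subgraphOfAdj huw).verts =
      (M.verts \ {u, u'}) ∪ {u, w} := by
  classical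
  have hu' : u' ≠ w := fun h => hw (h ▸ M.edge_vert huu'.symm)
  have hsupp : Disjoint (M.induce (M.verts \ {u, u'})).support (G.subgraphOfAdj huw).support := by
    rw [support_subgraphOfAdj, Set.disjoint_right]
    intro x hx hx2
    have := (M.induce (M.verts \ {u, u'})).support_subset_verts hx2
    simp only [Subgraph.induce_verts, Set.mem_diff, Set.mem_insert_iff,
      Set.mem_singleton_iff] at this
    rcases hx with rfl | rfl
    · exact this.2 (Or.inl rfl)
    · exact hw this.1
  have hmatch := (induce_matching hM.1 huu').sup (Subgraph.IsMatching.subgraphOfAdj huw) hsupp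
  have hedge : (M.induce (M.verts \ {u, u'}) ⊔ G.subgraphOfAdj huw).edgeSet =
      Insert.insert s(u, w) (M.edgeSet \ {s(u, u')}) := by
    rw [Subgraph.edgeSet_sup, induce_edgeSet hM.1 huu', edgeSet_subgraphOfAdj,
      Set.union_singleton]
  have hnotmem : s(u, w) ∉ M.edgeSet \ {s(u, u')} := by
    rintro ⟨h1, -⟩
    exact hw (M.edge_vert (Subgraph.mem_edgeSet.mp h1).symm)
  have hcard : (M.induce (M.verts \ {u, u'}) ⊔ G.subgraphOfAdj huw).edgeSet.ncard =
      M.edgeSet.ncard := by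
    rw [hedge, Set.ncard_insert_of_notMem hnotmem (Set.toFinite _),
      Set.ncard_diff_singleton_add_one (Subgraph.mem_edgeSet.mpr huu') (Set.toFinite _)]
  refine ⟨⟨hmatch, fun M'' hM'' => hcard ▸ hM.2 M'' hM''⟩, ?_, ?_⟩
  · exact Or.inr (by simp)
  · simp [Subgraph.verts_sup]

lemma no_adj_bc (hind : ∀ M : G.Subgraph, IsMaximumMatching G M → IsInducedMatching G M)
    {a b c d : V} (hab : G.Adj a b) (hbc : G.Adj b c) (hcd : G.Adj c d)
    (hac : a ≠ c) (hbd : b ≠ d) (had : a ≠ d)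
    {M : G.Subgraph} (hM : IsMaximumMatching G M) (hMbc : M.Adj b c) : False := by
  have ha : a ∉ M.verts := fun h => hac (unique_nbr (hind M hM) hMbc hab.symm h)
  have hd : d ∉ M.verts := fun h => hbd (unique_nbr (hind M hM) hMbc.symm hcd h).symm
  obtain ⟨hM', hadj', hverts'⟩ := swap_matching hM hMbc.symm hcd hd
  have hb' : b ∉ (M.induce (M.verts \ {c, b}) ⊔ G.subgraphOfAdj hcd).verts := by
    rw [hverts']
    rintro (⟨-, h⟩ | h)
    · exact h (Or.inr rfl)
    · rcases h with rfl | rfl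
      · exact hbc.ne rfl
      · exact hbd rfl
  have ha' : a ∉ (M.induce (M.verts \ {c, b}) ⊔ G.subgraphOfAdj hcd).verts := by
    rw [hverts']
    rintro (⟨h, -⟩ | h)
    · exact ha h
    · rcases h with rfl | rfl
      · exact hac rfl
      · exact had rfl
  exact no_augment hM' hab ha' hb'

lemma p4_half (hind : ∀ M : G.Subgraph, IsMaximumMatching G M → IsInducedMatching G M)
    {a b c d : V} (hab : G.Adj a b) (hbc : G.Adj b c) (hcd : G.Adj c d)
    (hac : a ≠ c) (hbd : b ≠ d) (had : a ≠ d)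
    {M : G.Subgraph} (hM : IsMaximumMatching G M) (hb : b ∈ M.verts) : False := by
  obtain ⟨x, hx, -⟩ := hM.1 hb
  by_cases hxc : x = c
  · exact no_adj_bc hind hab hbc hcd hac hbd had hM (hxc ▸ hx)
  · have hc : c ∉ M.verts := fun h => hxc (unique_nbr (hind M hM) hx hbc h).symm
    obtain ⟨hM', hadj', -⟩ := swap_matching hM hx hbc hc
    exact no_adj_bc hind hab hbc hcd hac hbd had hM' hadj'

lemma no_p4 (hind : ∀ M : G.Subgraph, IsMaximumMatching G M → IsInducedMatching G M)
    {a b c d : V} (hab : G.Adj a b) (hbc : G.Adj b c) (hcd : G.Adj c d)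
    (hac : a ≠ c) (hbd : b ≠ d) (had : a ≠ d) : False := by
  obtain ⟨M, hM⟩ := exists_maximum_matching G
  by_cases hb : b ∈ M.verts
  · exact p4_half hind hab hbc hcd hac hbd had hM hb
  · by_cases hc : c ∈ M.verts
    · exact p4_half hind hcd.symm hbc.symm hab.symm hbd.symm hac.symm had.symm hM hc
    · exact no_augment hM hbc hb hc

lemma boundary {S : Set V} : ∀ {a b : V}, G.Walk a b → a ∉ S → b ∈ S →
    ∃ p q, G.Adj p q ∧ p ∉ S ∧ q ∈ S
  | _, _, Walk.nil, ha, hb => absurd hb ha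
  | _, _, @Walk.cons _ _ _ m _ h W, ha, hb => by
    classical
    by_cases hv : m ∈ S
    · exact ⟨_, _, h, ha, hv⟩
    · exact boundary W hv hb

lemma center_case {c : G.ConnectedComponent}
    (htri : ¬∃ x y z : V, x ∈ c.supp ∧ G.Adj x y ∧ G.Adj y z ∧ G.Adj x z)
    {u t : V} (hu : u ∈ c.supp) (hut : G.Adj u t)
    (hcover : ∀ w ∈ c.supp, w = u ∨ w = t ∨ G.Adj u w ∨ G.Adj t w)
    (hleaf : ∀ y, G.Adj t y → y = u) :
    ∃ z ∈ c.supp, (∀ w ∈ c.supp, w ≠ z → G.Adj z w) ∧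
      ∀ x ∈ c.supp, ∀ y ∈ c.supp, x ≠ z → y ≠ z → ¬G.Adj x y := by
  refine ⟨u, hu, fun w hw hwu => ?_, fun x hx y hy hxu hyu hxy => ?_⟩
  · rcases hcover w hw with rfl | rfl | h | h
    · exact absurd rfl hwu
    · exact hut
    · exact h
    · exact absurd (hleaf w h) hwu
  · have hx' : x = t ∨ G.Adj u x := by
      rcases hcover x hx with rfl | rfl | h | h
      · exact absurd rfl hxu
      · exact Or.inl rfl
      · exact Or.inr h
      · exact absurd (hleaf x h) hxu
    have hy' : y = t ∨ G.Adj u y := by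
      rcases hcover y hy with rfl | rfl | h | h
      · exact absurd rfl hyu
      · exact Or.inl rfl
      · exact Or.inr h
      · exact absurd (hleaf y h) hyu
    rcases hx' with rfl | hx'
    · rcases hy' with rfl | hy'
      · exact hxy.ne rfl
      · exact hyu (hleaf y hxy)
    · rcases hy' with rfl | hy'
      · exact hxu (hleaf x hxy.symm)
      · exact htri ⟨u, x, y, hu, hx', hxy, hy'⟩

lemma reach_of_supp {c : G.ConnectedComponent} {w x : V} (hw : w ∈ c.supp) (hx : x ∈ c.supp) :
    G.Reachable w x := by
  rw [ConnectedComponent.mem_supp_iff] at hw hx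
  exact ConnectedComponent.exact (hw.trans hx.symm)

lemma adj_mem_supp {c : G.ConnectedComponent} {w x : V} (hw : w ∈ c.supp) (h : G.Adj w x) :
    x ∈ c.supp := by
  rw [ConnectedComponent.mem_supp_iff] at hw ⊢
  rw [← hw]
  exact (ConnectedComponent.connectedComponentMk_eq_of_adj h).symm

lemma component_structure
    (hp4 : ∀ a b c d : V, G.Adj a b → G.Adj b c → G.Adj c d → a ≠ c → b ≠ d → a ≠ d → False)
    (c : G.ConnectedComponent) :
    (∃ z ∈ c.supp, (∀ w ∈ c.supp, w ≠ z → G.Adj z w) ∧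
        ∀ x ∈ c.supp, ∀ y ∈ c.supp, x ≠ z → y ≠ z → ¬G.Adj x y) ∨
      (∃ x y z : V, G.Adj x y ∧ G.Adj y z ∧ G.Adj x z ∧ c.supp = {x, y, z}) := by
  classical
  obtain ⟨v, hv⟩ := c.exists_rep
  have hvc : v ∈ c.supp := hv
  by_cases htri : ∃ x y z : V, x ∈ c.supp ∧ G.Adj x y ∧ G.Adj y z ∧ G.Adj x z
  · -- triangle case
    obtain ⟨x, y, z, hx, hxy, hyz, hxz⟩ := htri
    have hy : y ∈ c.supp := adj_mem_supp hx hxy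
    have hz : z ∈ c.supp := adj_mem_supp hx hxz
    refine Or.inr ⟨x, y, z, hxy, hyz, hxz, Set.Subset.antisymm ?_ ?_⟩
    · intro w hw
      by_contra hwS
      obtain ⟨W⟩ := reach_of_supp hw hx
      obtain ⟨p, q, hpq, hp, hq⟩ := boundary W hwS (by simp)
      simp only [Set.mem_insert_iff, Set.mem_singleton_iff, not_or] at hp
      obtain ⟨hp1, hp2, hp3⟩ := hp
      rcases hq with rfl | rfl | rfl
      · exact hp4 p q y z hpq hxy hyz hp2 hxz.ne hp3
      · exact hp4 p q x z hpq hxy.symm hxz hp1 hyz.ne hp3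
      · exact hp4 p q x y hpq hxz.symm hxy hp1 (fun h => hyz.ne h.symm) hp2
    · rintro w (rfl | rfl | rfl) <;> assumption
  · -- triangle-free case
    by_cases hsing : ∀ w ∈ c.supp, w = v
    · refine Or.inl ⟨v, hvc, fun w hw hwv => absurd (hsing w hw) hwv,
        fun x hx y hy hxv _ _ => hxv (hsing x hx)⟩
    · push_neg at hsing
      obtain ⟨t0, ht0, ht0v⟩ := hsing
      obtain ⟨W⟩ := reach_of_supp hvc ht0
      have hedge : ∃ t, G.Adj v t := by
        cases W with
        | nil => exact absurd rfl ht0v.symm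
        | cons h _ => exact ⟨_, h⟩
      obtain ⟨t, hvt⟩ := hedge
      set S : Set V := {x | x = v ∨ x = t ∨ G.Adj v x ∨ G.Adj t x} with hSdef
      have hcover : ∀ w ∈ c.supp, w ∈ S := by
        intro w hw
        by_contra hwS
        obtain ⟨W'⟩ := reach_of_supp hw hvc
        obtain ⟨p, q, hpq, hp, hq⟩ := boundary W' hwS (Or.inl rfl)
        simp only [hSdef, Set.mem_setOf_eq, not_or] at hp
        obtain ⟨hp1, hp2, hp3, hp4'⟩ := hp
        rcases hq with rfl | rfl | hq | hq
        · exact hp3 hpq.symm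
        · exact hp4' hpq.symm
        · -- G.Adj v q, q ≠ v, build P4 p-q-v-t unless q = t
          by_cases hqt : q = t
          · exact hp4' (hqt ▸ hpq).symm
          · exact hp4 p q v t hpq hq.symm hvt hp1 hqt hp2
        · by_cases hqv : q = v
          · exact hp3 (hqv ▸ hpq).symm
          · exact hp4 p q t v hpq hq.symm hvt.symm hp2 hqv hp1
      by_cases hNt : ∀ y, G.Adj t y → y = v
      · refine Or.inl (center_case htri hvc hvt ?_ hNt)
        intro w hw
        exact hcover w hw
      · push_neg at hNt
        obtain ⟨y, hty, hyv⟩ := hNt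
        by_cases hNu : ∀ x, G.Adj v x → x = t
        · have ht : t ∈ c.supp := adj_mem_supp hvc hvt
          refine Or.inl (center_case htri ht hvt.symm ?_ hNu)
          intro w hw
          rcases hcover w hw with rfl | rfl | h | h
          · exact Or.inr (Or.inl rfl)
          · exact Or.inl rfl
          · exact Or.inr (Or.inr (Or.inr h))
          · exact Or.inr (Or.inr (Or.inl h))
        · push_neg at hNu
          obtain ⟨x, hvx, hxt⟩ := hNu
          have hxy : x ≠ y := by
            rintro rfl
            exact htri ⟨v, x, t, hvc, hvx, hty.symm, hvt⟩
          exact absurd (hp4 x v t y hvx.symm hvt hty hxt hyv.symm hxy) id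

lemma induce_adj_iff {s : Set V} {x y : s} : (G.induce s).Adj x y ↔ G.Adj ↑x ↑y := by
  simp [comap_adj]

lemma star_iso {s : Set V} {z : V} (hz : z ∈ s)
    (hcent : ∀ w ∈ s, w ≠ z → G.Adj z w)
    (hind : ∀ x ∈ s, ∀ y ∈ s, x ≠ z → y ≠ z → ¬G.Adj x y) :
    ∃ k : ℕ, Nonempty ((G.induce s) ≃g completeBipartiteGraph (Fin 1) (Fin k)) := by
  classical
  set k := Fintype.card {x : s // (x : V) ≠ z} with hk
  set f : {x : s // (x : V) ≠ z} ≃ Fin k := Fintype.equivFin _ with hf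
  refine ⟨k, ⟨⟨⟨fun x => if h : (x : V) = z then Sum.inl 0 else Sum.inr (f ⟨x, h⟩),
    fun p => Sum.rec (fun _ => ⟨z, hz⟩) (fun j => (f.symm j).1) p, ?_, ?_⟩, ?_⟩⟩⟩
  · intro x
    by_cases h : (x : V) = z
    · simp only [h, dif_pos]
      exact Subtype.ext h.symm
    · simp only [h, dif_neg, not_false_iff]
      simp [f.symm_apply_apply]
  · intro p
    rcases p with i | j
    · simp only [dif_pos rfl]
      exact congrArg Sum.inl (Subsingleton.elim _ _)
    · have h2 : ((f.symm j).1 : V) ≠ z := (f.symm j).2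
      simp only [h2, dif_neg, not_false_iff]
      exact congrArg Sum.inr
        (by rw [show (⟨(f.symm j).1, h2⟩ : {x : s // (x : V) ≠ z}) = f.symm j from rfl,
              f.apply_symm_apply])
  · intro x y
    simp only [Equiv.coe_fn_mk]
    by_cases hx : (x : V) = z <;> by_cases hy : (y : V) = z <;>
      simp only [hx, hy, dif_pos, dif_neg, not_false_iff]
    · refine iff_of_false ?_ ?_
      · rintro (⟨h1, h2⟩ | ⟨h1, h2⟩) <;> simp at h1 h2
      · intro h
        exact (induce_adj_iff.mp h).ne (hx.trans hy.symm)
    · refine iff_of_true (Or.inl ⟨rfl, rfl⟩) ?_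
      exact induce_adj_iff.mpr (hx ▸ hcent ↑y y.2 hy)
    · refine iff_of_true (Or.inr ⟨rfl, rfl⟩) ?_
      exact induce_adj_iff.mpr (hy ▸ (hcent ↑x x.2 hx).symm)
    · refine iff_of_false ?_ ?_
      · rintro (⟨h1, h2⟩ | ⟨h1, h2⟩) <;> simp at h1 h2
      · intro h
        exact hind ↑x x.2 ↑y y.2 hx hy (induce_adj_iff.mp h)

lemma triangle_iso {s : Set V} {x y z : V} (hxy : G.Adj x y) (hyz : G.Adj y z)
    (hxz : G.Adj x z) (hs : s = {x, y, z}) :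
    Nonempty ((G.induce s) ≃g (⊤ : SimpleGraph (Fin 3))) := by
  classical
  have hx : x ∈ s := by rw [hs]; simp
  have hy : y ∈ s := by rw [hs]; simp
  have hz : z ∈ s := by rw [hs]; simp
  have hmem : ∀ w : s, (w : V) = x ∨ (w : V) = y ∨ (w : V) = z := by
    rintro ⟨w, hw⟩
    rw [hs] at hw
    simpa using hw
  have e : s ≃ Fin 3 :=
    ⟨fun w => if (w : V) = x then 0 else if (w : V) = y then 1 else 2,
     fun i => if i = 0 then ⟨x, hx⟩ else if i = 1 then ⟨y, hy⟩ else ⟨z, hz⟩, ?_, ?_⟩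
  · refine ⟨⟨e, ?_⟩⟩
    intro a b
    rw [top_adj, ← not_iff_not, not_ne_iff, e.apply_eq_iff_eq]
    constructor
    · rintro rfl
      exact fun h => (induce_adj_iff.mp h).ne rfl
    · intro hnadj
      by_contra hne
      refine hnadj ?_
      rcases hmem a with ha | ha | ha <;> rcases hmem b with hb | hb | hb <;>
        first
          | exact absurd (Subtype.ext (ha.trans hb.symm)) hne
          | exact induce_adj_iff.mpr (by rw [ha, hb]; first
              | exact hxy | exact hxy.symm | exact hyz | exact hyz.symm
              | exact hxz | exact hxz.symm)
  · rintro ⟨w, hw⟩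
    rcases hmem ⟨w, hw⟩ with h | h | h <;> simp only at h <;> subst h <;>
      simp [hxy.ne', hxz.ne', hyz.ne']
  · intro i
    fin_cases i <;> simp [hxy.ne', hxz.ne', hyz.ne']

lemma backward_dir
    (hstar : ∀ c : G.ConnectedComponent,
      (∃ k : ℕ, Nonempty ((G.induce c.supp) ≃g completeBipartiteGraph (Fin 1) (Fin k))) ∨
        Nonempty ((G.induce c.supp) ≃g (⊤ : SimpleGraph (Fin 3))))
    {M : G.Subgraph} (hM : M.IsMatching) : IsInducedMatching G M := by
  classical
  refine ⟨hM, ?_⟩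
  rintro ⟨v, hv⟩
  obtain ⟨w, hw, huniq⟩ := hM hv
  refine ⟨⟨w, M.edge_vert hw.symm⟩, M.adj_sub hw, ?_⟩
  rintro ⟨w', hw'⟩ hadj
  simp only [comap_adj, Function.Embedding.coe_subtype] at hadj
  by_contra hne
  have hww' : w' ≠ w := fun h => hne (Subtype.ext h)
  obtain ⟨x, hx, hxuniq⟩ := hM hw'
  have hw'v : w' ≠ v := hadj.ne'
  have hxv : x ≠ v := by
    rintro rfl
    exact hww' (huniq w' hx.symm)
  have hxw : x ≠ w := by
    rintro rfl
    obtain ⟨q, hq, hquniq⟩ := hM (M.edge_vert hw.symm)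
    exact hw'v ((hquniq w' hx.symm).trans (hquniq v hw.symm).symm)
  set c := G.connectedComponentMk v with hc
  have hvc : v ∈ c.supp := rfl
  have hwc : w ∈ c.supp := adj_mem_supp hvc (M.adj_sub hw)
  have hw'c : w' ∈ c.supp := adj_mem_supp hvc hadj
  have hxc : x ∈ c.supp := adj_mem_supp hw'c (M.adj_sub hx)
  have key : ∀ (p q : c.supp), G.Adj ↑p ↑q ↔ (G.induce c.supp).Adj p q := by
    intro p q
    rw [induce_adj_iff]
  rcases hstar c with ⟨k, ⟨e⟩⟩ | he3'
  · have hadj1 : (completeBipartiteGraph (Fin 1) (Fin k)).Adj (e ⟨v, hvc⟩) (e ⟨w, hwc⟩) :=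
      e.map_rel_iff.mpr ((key _ _).mp (M.adj_sub hw))
    have hadj2 : (completeBipartiteGraph (Fin 1) (Fin k)).Adj (e ⟨v, hvc⟩) (e ⟨w', hw'c⟩) :=
      e.map_rel_iff.mpr ((key _ _).mp hadj)
    have hadj3 : (completeBipartiteGraph (Fin 1) (Fin k)).Adj (e ⟨w', hw'c⟩) (e ⟨x, hxc⟩) :=
      e.map_rel_iff.mpr ((key _ _).mp (M.adj_sub hx))
    rcases he : e ⟨v, hvc⟩ with a | a
    · rw [he] at hadj1 hadj2
      rcases he2 : e ⟨w', hw'c⟩ with b | b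
      · rw [he2] at hadj2; simp [completeBipartiteGraph_adj] at hadj2
      · rw [he2] at hadj3
        rcases he3 : e ⟨x, hxc⟩ with d | d
        · have : e ⟨x, hxc⟩ = e ⟨v, hvc⟩ := by
            rw [he, he3, Subsingleton.elim d a]
          exact hxv (congrArg Subtype.val (e.toEquiv.injective this))
        · rw [he3] at hadj3; simp [completeBipartiteGraph_adj] at hadj3
    · rw [he] at hadj1 hadj2
      rcases he2 : e ⟨w, hwc⟩ with b | b
      · rcases he3 : e ⟨w', hw'c⟩ with d | d
        · have : e ⟨w', hw'c⟩ = e ⟨w, hwc⟩ := by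
            rw [he2, he3, Subsingleton.elim d b]
          exact hww' (congrArg Subtype.val (e.toEquiv.injective this))
        · rw [he3] at hadj2; simp [completeBipartiteGraph_adj] at hadj2
      · rw [he2] at hadj1; simp [completeBipartiteGraph_adj] at hadj1
  · obtain ⟨e⟩ := he3'
    have hvw : v ≠ w := (M.adj_sub hw).ne
    have hw'x : w' ≠ x := (M.adj_sub hx).ne
    have d1 : e ⟨v, hvc⟩ ≠ e ⟨w, hwc⟩ := fun h =>
      hvw (congrArg Subtype.val (e.toEquiv.injective h))
    have d2 : e ⟨v, hvc⟩ ≠ e ⟨w', hw'c⟩ := fun h =>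
      hw'v.symm (congrArg Subtype.val (e.toEquiv.injective h))
    have d3 : e ⟨v, hvc⟩ ≠ e ⟨x, hxc⟩ := fun h =>
      hxv.symm (congrArg Subtype.val (e.toEquiv.injective h))
    have d4 : e ⟨w, hwc⟩ ≠ e ⟨w', hw'c⟩ := fun h =>
      hww' (congrArg Subtype.val (e.toEquiv.injective h)).symm
    have d5 : e ⟨w, hwc⟩ ≠ e ⟨x, hxc⟩ := fun h =>
      hxw (congrArg Subtype.val (e.toEquiv.injective h)).symm
    have d6 : e ⟨w', hw'c⟩ ≠ e ⟨x, hxc⟩ := fun h =>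
      hw'x (congrArg Subtype.val (e.toEquiv.injective h))
    have v1 := (e ⟨v, hvc⟩).isLt
    have v2 := (e ⟨w, hwc⟩).isLt
    have v3 := (e ⟨w', hw'c⟩).isLt
    have v4 := (e ⟨x, hxc⟩).isLt
    rw [Fin.ne_iff_vne] at d1 d2 d3 d4 d5 d6
    omega

end Helpers

/-- For a finite simple graph `G`, every maximum matching in `G` is
induced if and only if every connected component of `G` is a star `K_{1,k}`
(for some `k ≥ 0`) or a triangle `K_3`. -/
theorem every_maximumMatching_induced_iff {V : Type*} [Fintype V] (G : SimpleGraph V) :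
    (∀ M : G.Subgraph, IsMaximumMatching G M → IsInducedMatching G M) ↔
      (∀ c : G.ConnectedComponent,
        (∃ k : ℕ, Nonempty ((G.induce c.supp) ≃g completeBipartiteGraph (Fin 1) (Fin k))) ∨
          Nonempty ((G.induce c.supp) ≃g (⊤ : SimpleGraph (Fin 3)))) := by
  constructor
  · intro hind c
    rcases component_structure
        (fun a b c' d hab hbc hcd hac hbd had => no_p4 hind hab hbc hcd hac hbd had) c with
      ⟨z, hz, hcent, hindep⟩ | ⟨x, y, z, hxy, hyz, hxz, hs⟩
    · exact Or.inl (star_iso hz hcent hindep)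
    · exact Or.inr (triangle_iso hxy hyz hxz hs)
  · intro hstar M hM
    exact backward_dir hstar hM.1
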